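/- Let K be a J-mode tensor that factors according to a tree 𝒯 = (𝒱, ℰ) as K_{i_1,…,i_J} = Π_{(j_1,j_2)∈ℰ} K^{(j_1,j_2)}_{i_{j_1},i_{j_2}} with strictly positive matrices K^{(j_1,j_2)}, and let M = K ⊙ U with U = u_1 ⊗ ⋯ ⊗ u_J for strictly positive vectors u_j. If node k lies on the path between nodes j and ℓ in the tree, then for all indices i_j, i_k, i_ℓ: P_{j,k,ℓ}(M)_{i_j,i_k,i_ℓ} · P_k(M)_{i_k} = P_{j,k}(M)_{i_j,i_k} · P_{k,ℓ}(M)_{i_k,i_ℓ}. In particular, for each fixed i_k the matrix (P_{j,k,ℓ}(M))_{·, i_k, ·} has rank at most 1. -/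

import Mathlib

open Finset

/-- A matrix whose entries factor as `a x * b z` has rank at most 1. -/
lemma rank1_aux {n : ℕ} (a b : Fin n → ℝ) :
    (Matrix.of fun x z => a x * b z).rank ≤ 1 := by
  have h : (Matrix.of fun x z => a x * b z) = Matrix.replicateCol (Fin 1) a * Matrix.replicateRow (Fin 1) b := by
    ext x z
    simp [Matrix.mul_apply]
  rw [h]
  refine le_trans (Matrix.rank_mul_le_left _ _) ?_
  simpa using Matrix.rank_le_card_width (Matrix.replicateCol (Fin 1) a)

/-- Conditional independence for tree-structured tensors: if `k` lies on the path between
`j` and `ℓ`, then `P_{jkℓ}(M)·P_k(M) = P_{jk}(M)·P_{kℓ}(M)` pointwise; in particular each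
slice `(P_{jkℓ}(M))_{·,i_k,·}` has rank at most 1. -/
theorem tree_conditional_independence {n J : ℕ}
    (E : Finset (Fin J × Fin J)) (G : SimpleGraph (Fin J)) [DecidableRel G.Adj]
    (hG : ∀ a b, G.Adj a b ↔ ((a, b) ∈ E ∨ (b, a) ∈ E))
    (htree : G.IsTree)
    (K : Fin J → Fin J → Matrix (Fin n) (Fin n) ℝ)
    (hpos : ∀ p ∈ E, ∀ x y, 0 < K p.1 p.2 x y)
    (u : Fin J → Fin n → ℝ) (hu : ∀ j x, 0 < u j x)
    (M : (Fin J → Fin n) → ℝ)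
    (hM : ∀ i, M i = (∏ e ∈ E, K e.1 e.2 (i e.1) (i e.2)) * ∏ j, u j (i j))
    (j k ℓ : Fin J) (p : G.Walk j ℓ) (hp : p.IsPath) (hk : k ∈ p.support) :
    (∀ x y z : Fin n,
      (∑ i : Fin J → Fin n, if i j = x ∧ i k = y ∧ i ℓ = z then M i else 0)
          * (∑ i : Fin J → Fin n, if i k = y then M i else 0)
        = (∑ i : Fin J → Fin n, if i j = x ∧ i k = y then M i else 0)
          * (∑ i : Fin J → Fin n, if i k = y ∧ i ℓ = z then M i else 0)) ∧
    (∀ y : Fin n,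
      (Matrix.of fun x z =>
        ∑ i : Fin J → Fin n, if i j = x ∧ i k = y ∧ i ℓ = z then M i else 0).rank ≤ 1) := by
  classical
  -- helper for rewriting conditions inside indicator sums
  have scongr : ∀ (c d : (Fin J → Fin n) → Prop) (_ : DecidablePred c) (_ : DecidablePred d),
      (∀ i, c i ↔ d i) →
      (∑ i : Fin J → Fin n, if c i then M i else 0)
        = ∑ i : Fin J → Fin n, if d i then M i else 0 := by
    intro c d _ _ h
    exact Finset.sum_congr rfl fun i _ => if_congr (h i) rfl rfl
  by_cases hkj : k = j
  · -- degenerate case k = j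
    subst hkj
    constructor
    · intro x y z
      by_cases hxy : x = y
      · subst hxy
        have e1 : (∑ i : Fin J → Fin n, if i k = x ∧ i k = x ∧ i ℓ = z then M i else 0)
            = ∑ i : Fin J → Fin n, if i k = x ∧ i ℓ = z then M i else 0 :=
          scongr _ _ _ _ (fun i => by tauto)
        have e2 : (∑ i : Fin J → Fin n, if i k = x ∧ i k = x then M i else 0)
            = ∑ i : Fin J → Fin n, if i k = x then M i else 0 :=
          scongr _ _ _ _ (fun i => by tauto)
        rw [e1, e2]
        ring
      · have z1 : (∑ i : Fin J → Fin n, if i k = x ∧ i k = y ∧ i ℓ = z then M i else 0) = 0 :=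
          Finset.sum_eq_zero fun i _ => if_neg (by rintro ⟨h1, h2, -⟩; exact hxy (h1.symm.trans h2))
        have z2 : (∑ i : Fin J → Fin n, if i k = x ∧ i k = y then M i else 0) = 0 :=
          Finset.sum_eq_zero fun i _ => if_neg (by rintro ⟨h1, h2⟩; exact hxy (h1.symm.trans h2))
        rw [z1, z2, zero_mul, zero_mul]
    · intro y
      have hm : (Matrix.of fun x z =>
            ∑ i : Fin J → Fin n, if i k = x ∧ i k = y ∧ i ℓ = z then M i else 0)
          = Matrix.of fun x z => (fun x => if x = y then (1:ℝ) else 0) x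
              * (fun z => ∑ i : Fin J → Fin n, if i k = y ∧ i ℓ = z then M i else 0) z := by
        ext x z
        by_cases hxy : x = y
        · subst hxy
          simp only [Matrix.of_apply, eq_self_iff_true, if_true, one_mul]
          exact scongr _ _ _ _ (fun i => by tauto)
        · simp only [Matrix.of_apply, if_neg hxy, zero_mul]
          exact Finset.sum_eq_zero fun i _ =>
            if_neg (by rintro ⟨h1, h2, -⟩; exact hxy (h1.symm.trans h2))
      rw [hm]
      exact rank1_aux _ _
  by_cases hkl : k = ℓ
  · -- degenerate case k = ℓ
    subst hkl
    constructor
    · intro x y z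
      by_cases hyz : y = z
      · subst hyz
        have e1 : (∑ i : Fin J → Fin n, if i j = x ∧ i k = y ∧ i k = y then M i else 0)
            = ∑ i : Fin J → Fin n, if i j = x ∧ i k = y then M i else 0 :=
          scongr _ _ _ _ (fun i => by tauto)
        have e2 : (∑ i : Fin J → Fin n, if i k = y ∧ i k = y then M i else 0)
            = ∑ i : Fin J → Fin n, if i k = y then M i else 0 :=
          scongr _ _ _ _ (fun i => by tauto)
        rw [e1, e2]
      · have z1 : (∑ i : Fin J → Fin n, if i j = x ∧ i k = y ∧ i k = z then M i else 0) = 0 :=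
          Finset.sum_eq_zero fun i _ => if_neg (by rintro ⟨-, h1, h2⟩; exact hyz (h1.symm.trans h2))
        have z2 : (∑ i : Fin J → Fin n, if i k = y ∧ i k = z then M i else 0) = 0 :=
          Finset.sum_eq_zero fun i _ => if_neg (by rintro ⟨h1, h2⟩; exact hyz (h1.symm.trans h2))
        rw [z1, z2, zero_mul, mul_zero]
    · intro y
      have hm : (Matrix.of fun x z =>
            ∑ i : Fin J → Fin n, if i j = x ∧ i k = y ∧ i k = z then M i else 0)
          = Matrix.of fun x z => (fun x => ∑ i : Fin J → Fin n, if i j = x ∧ i k = y then M i else 0) x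
              * (fun z => if z = y then (1:ℝ) else 0) z := by
        ext x z
        by_cases hzy : z = y
        · subst hzy
          simp only [Matrix.of_apply, eq_self_iff_true, if_true, mul_one]
          exact scongr _ _ _ _ (fun i => by tauto)
        · simp only [Matrix.of_apply, if_neg hzy, mul_zero]
          exact Finset.sum_eq_zero fun i _ =>
            if_neg (by rintro ⟨-, h1, h2⟩; exact hzy (h2.symm.trans h1))
      rw [hm]
      exact rank1_aux _ _
  -- main case: k ≠ j and k ≠ ℓ
  -- P v : v is on the j-side of the tree after removing k
  set P : Fin J → Prop := fun v => v ≠ k ∧ ∃ w : G.Walk j v, k ∉ w.support with hPdef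
  have hPj : P j := by
    refine ⟨fun h => hkj h.symm, SimpleGraph.Walk.nil, ?_⟩
    rw [SimpleGraph.Walk.support_nil, List.mem_singleton]
    exact hkj
  have hPk : ¬ P k := fun h => h.1 rfl
  have hPl : ¬ P ℓ := by
    rintro ⟨hlk, w, hw⟩
    have hq : w.toPath = (⟨p, hp⟩ : G.Path j ℓ) := htree.IsAcyclic.path_unique _ _
    have hmem : k ∈ (w.toPath : G.Walk j ℓ).support := by rw [hq]; exact hk
    exact hw (SimpleGraph.Walk.support_toPath_subset w hmem)
  have step : ∀ a b : Fin J, P a → G.Adj a b → b ≠ k → P b := by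
    rintro a b ⟨hak, w, hw⟩ hadj hbk
    refine ⟨hbk, w.concat hadj, ?_⟩
    rw [SimpleGraph.Walk.support_concat]
    simp only [List.concat_eq_append, List.mem_append, List.mem_singleton]
    rintro (h | h)
    · exact hw h
    · exact hbk h.symm
  -- classify edges
  set c : Fin J × Fin J → Prop := fun e => P e.1 ∨ P e.2 with hcdef
  have hcF : ∀ e ∈ E, c e → (e.1 = k ∨ P e.1) ∧ (e.2 = k ∨ P e.2) := by
    rintro e he (h1 | h2)
    · refine ⟨Or.inr h1, ?_⟩
      by_cases h : e.2 = k
      · exact Or.inl h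
      · exact Or.inr (step _ _ h1 ((hG e.1 e.2).mpr (Or.inl he)) h)
    · refine ⟨?_, Or.inr h2⟩
      by_cases h : e.1 = k
      · exact Or.inl h
      · exact Or.inr (step _ _ h2 ((hG e.2 e.1).mpr (Or.inr he)) h)
  -- the two factors
  set F : (Fin J → Fin n) → ℝ := fun i =>
    (∏ e ∈ E.filter c, K e.1 e.2 (i e.1) (i e.2)) * ∏ v ∈ Finset.univ.filter P, u v (i v)
    with hFdef
  set Gf : (Fin J → Fin n) → ℝ := fun i =>
    (∏ e ∈ E.filter fun e => ¬ c e, K e.1 e.2 (i e.1) (i e.2))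
      * ∏ v ∈ Finset.univ.filter fun v => ¬ P v, u v (i v) with hGfdef
  have hMFG : ∀ i, M i = F i * Gf i := by
    intro i
    rw [hM i, hFdef, hGfdef]
    rw [← Finset.prod_filter_mul_prod_filter_not E c fun e => K e.1 e.2 (i e.1) (i e.2),
      ← Finset.prod_filter_mul_prod_filter_not Finset.univ P fun v => u v (i v),
      mul_mul_mul_comm]
  have hFdep : ∀ i i' : Fin J → Fin n, (∀ v, P v → i v = i' v) → i k = i' k → F i = F i' := by
    intro i i' hv hkk
    have hrep : ∀ v : Fin J, v = k ∨ P v → i v = i' v := by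
      rintro v (rfl | h)
      · exact hkk
      · exact hv v h
    rw [hFdef]
    dsimp only
    congr 1
    · refine Finset.prod_congr rfl fun e he => ?_
      rw [Finset.mem_filter] at he
      obtain ⟨h1, h2⟩ := hcF e he.1 he.2
      rw [hrep e.1 h1, hrep e.2 h2]
    · refine Finset.prod_congr rfl fun v hv' => ?_
      rw [Finset.mem_filter] at hv'
      rw [hv v hv'.2]
  have hGdep : ∀ i i' : Fin J → Fin n, (∀ v, ¬ P v → i v = i' v) → Gf i = Gf i' := by
    intro i i' hv
    rw [hGfdef]
    dsimp only
    congr 1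
    · refine Finset.prod_congr rfl fun e he => ?_
      rw [Finset.mem_filter] at he
      have h1 : ¬ P e.1 := fun h => he.2 (Or.inl h)
      have h2 : ¬ P e.2 := fun h => he.2 (Or.inr h)
      rw [hv e.1 h1, hv e.2 h2]
    · refine Finset.prod_congr rfl fun v hv' => ?_
      rw [Finset.mem_filter] at hv'
      rw [hv v hv'.2]
  -- merge of partial assignments
  set merge : ({v : Fin J // P v} → Fin n) → ({v : Fin J // ¬ P v} → Fin n) → (Fin J → Fin n) :=
    fun a b v => if h : P v then a ⟨v, h⟩ else b ⟨v, h⟩ with hmerge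
  have hsum : ∀ φ : (Fin J → Fin n) → ℝ, (∑ i, φ i) = ∑ a, ∑ b, φ (merge a b) := by
    intro φ
    rw [← Equiv.sum_comp (Equiv.piEquivPiSubtypeProd P fun _ => Fin n).symm φ,
      Fintype.sum_prod_type]
    rfl
  have hmj : ∀ a b, merge a b j = a ⟨j, hPj⟩ := by
    intro a b; rw [hmerge]; exact dif_pos hPj
  have hmk : ∀ a b, merge a b k = b ⟨k, hPk⟩ := by
    intro a b; rw [hmerge]; exact dif_neg hPk
  have hml : ∀ a b, merge a b ℓ = b ⟨ℓ, hPl⟩ := by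
    intro a b; rw [hmerge]; exact dif_neg hPl
  set Fh : ({v : Fin J // P v} → Fin n) → Fin n → ℝ := fun a y => F (merge a fun _ => y)
    with hFh
  set Gh : ({v : Fin J // ¬ P v} → Fin n) → ℝ := fun b => Gf (merge (fun _ => b ⟨k, hPk⟩) b)
    with hGh
  have key : ∀ (y : Fin n) (q : (Fin J → Fin n) → Prop)
      (qA : ({v : Fin J // P v} → Fin n) → Prop)
      (qB : ({v : Fin J // ¬ P v} → Fin n) → Prop)
      [DecidablePred q] [DecidablePred qA] [DecidablePred qB],
      (∀ a b, q (merge a b) ↔ qA a ∧ qB b) →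
      (∀ b, qB b → b ⟨k, hPk⟩ = y) →
      (∑ i : Fin J → Fin n, if q i then M i else 0)
        = (∑ a, if qA a then Fh a y else 0) * (∑ b, if qB b then Gh b else 0) := by
    intro y q qA qB _ _ _ hq hby
    rw [hsum fun i => if q i then M i else 0, Fintype.sum_mul_sum]
    refine Finset.sum_congr rfl fun a _ => Finset.sum_congr rfl fun b _ => ?_
    show (if q (merge a b) then M (merge a b) else 0)
        = (if qA a then Fh a y else 0) * (if qB b then Gh b else 0)
    by_cases hA : qA a
    · by_cases hB : qB b
      · rw [if_pos ((hq a b).mpr ⟨hA, hB⟩), if_pos hA, if_pos hB, hMFG]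
        have hbk : b ⟨k, hPk⟩ = y := hby b hB
        congr 1
        · rw [hFh]
          refine hFdep _ _ (fun v hv => ?_) ?_
          · rw [hmerge]
            dsimp only
            rw [dif_pos hv, dif_pos hv]
          · rw [hmerge]
            dsimp only
            rw [dif_neg hPk, dif_neg hPk]
            exact hbk
        · rw [hGh]
          refine hGdep _ _ (fun v hv => ?_)
          rw [hmerge]
          dsimp only
          rw [dif_neg hv, dif_neg hv]
      · rw [if_neg (fun h => hB ((hq a b).mp h).2), if_neg hB, mul_zero]
    · rw [if_neg (fun h => hA ((hq a b).mp h).1), if_neg hA, zero_mul]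
  -- the four marginal factorizations (for fixed x y z)
  have E1 : ∀ x y z : Fin n,
      (∑ i : Fin J → Fin n, if i j = x ∧ i k = y ∧ i ℓ = z then M i else 0)
        = (∑ a, if a ⟨j, hPj⟩ = x then Fh a y else 0)
          * (∑ b, if b ⟨k, hPk⟩ = y ∧ b ⟨ℓ, hPl⟩ = z then Gh b else 0) := by
    intro x y z
    refine key y (fun i => i j = x ∧ i k = y ∧ i ℓ = z) (fun a => a ⟨j, hPj⟩ = x)
      (fun b => b ⟨k, hPk⟩ = y ∧ b ⟨ℓ, hPl⟩ = z) (fun a b => ?_) (fun b hb => hb.1)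
    show (merge a b j = x ∧ merge a b k = y ∧ merge a b ℓ = z)
        ↔ a ⟨j, hPj⟩ = x ∧ (b ⟨k, hPk⟩ = y ∧ b ⟨ℓ, hPl⟩ = z)
    rw [hmj, hmk, hml]
  have E2 : ∀ y : Fin n,
      (∑ i : Fin J → Fin n, if i k = y then M i else 0)
        = (∑ a, if True then Fh a y else 0) * (∑ b, if b ⟨k, hPk⟩ = y then Gh b else 0) := by
    intro y
    refine key y (fun i => i k = y) (fun _ => True) (fun b => b ⟨k, hPk⟩ = y)
      (fun a b => ?_) (fun b hb => hb)
    show merge a b k = y ↔ True ∧ b ⟨k, hPk⟩ = y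
    rw [hmk, true_and]
  have E3 : ∀ x y : Fin n,
      (∑ i : Fin J → Fin n, if i j = x ∧ i k = y then M i else 0)
        = (∑ a, if a ⟨j, hPj⟩ = x then Fh a y else 0)
          * (∑ b, if b ⟨k, hPk⟩ = y then Gh b else 0) := by
    intro x y
    refine key y (fun i => i j = x ∧ i k = y) (fun a => a ⟨j, hPj⟩ = x)
      (fun b => b ⟨k, hPk⟩ = y) (fun a b => ?_) (fun b hb => hb)
    show (merge a b j = x ∧ merge a b k = y) ↔ a ⟨j, hPj⟩ = x ∧ b ⟨k, hPk⟩ = y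
    rw [hmj, hmk]
  have E4 : ∀ y z : Fin n,
      (∑ i : Fin J → Fin n, if i k = y ∧ i ℓ = z then M i else 0)
        = (∑ a, if True then Fh a y else 0)
          * (∑ b, if b ⟨k, hPk⟩ = y ∧ b ⟨ℓ, hPl⟩ = z then Gh b else 0) := by
    intro y z
    refine key y (fun i => i k = y ∧ i ℓ = z) (fun _ => True)
      (fun b => b ⟨k, hPk⟩ = y ∧ b ⟨ℓ, hPl⟩ = z) (fun a b => ?_) (fun b hb => hb.1)
    show (merge a b k = y ∧ merge a b ℓ = z) ↔ True ∧ (b ⟨k, hPk⟩ = y ∧ b ⟨ℓ, hPl⟩ = z)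
    rw [hmk, hml, true_and]
  constructor
  · intro x y z
    rw [E1, E2, E3, E4]
    ring
  · intro y
    have hm : (Matrix.of fun x z =>
          ∑ i : Fin J → Fin n, if i j = x ∧ i k = y ∧ i ℓ = z then M i else 0)
        = Matrix.of fun x z => (fun x => ∑ a, if a ⟨j, hPj⟩ = x then Fh a y else 0) x
            * (fun z => ∑ b, if b ⟨k, hPk⟩ = y ∧ b ⟨ℓ, hPl⟩ = z then Gh b else 0) z := by
      ext x z
      exact E1 x y z
    rw [hm]
    exact rank1_aux _ _
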